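/- Let T ≥ 2/π. Then the periodic Gaussian Φ_T is T²-smooth; that is, |Φ_T''(x)| ≤ T² for all x ∈ ℝ. -/

import Mathlib

open Real

noncomputable def periodicGaussian (T : ℝ) (x : ℝ) : ℝ :=
  (∑' j : ℤ, Real.exp (-(x + 2 * j * π) ^ 2 * T ^ 2 / 2)) /
  (∑' j : ℤ, Real.exp (-(2 * j * π) ^ 2 * T ^ 2 / 2))

noncomputable def thetaR (s : ℝ) : ℝ := ∑' n : ℤ, Real.exp (-s * (n:ℝ) ^ 2)

private lemma sum_nat_aux (c : ℝ) (hc : 0 < c) (k : ℕ) :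
    Summable (fun n : ℕ => (n : ℝ) ^ k * Real.exp (-c * (n:ℝ) ^ 2)) := by
  refine Summable.of_nonneg_of_le (fun n => by positivity) (fun n => ?_)
    (summable_pow_mul_geometric_of_norm_lt_one k (r := Real.exp (-c)) ?_)
  · have h1 : Real.exp (-c * (n:ℝ) ^ 2) ≤ Real.exp (-c) ^ n := by
      rw [← Real.exp_nat_mul]
      apply Real.exp_le_exp.2
      have : (n : ℝ) ≤ (n:ℝ)^2 := by
        have := Nat.le_self_pow (two_ne_zero) n
        exact_mod_cast this
      nlinarith
    have h2 : (0:ℝ) ≤ (n:ℝ)^k := by positivity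
    nlinarith [Real.exp_pos (-c * (n:ℝ)^2)]
  · rw [Real.norm_eq_abs, abs_of_pos (Real.exp_pos _)]
    exact Real.exp_lt_one_iff.2 (neg_lt_zero.2 hc)

private lemma sum_int_aux (c : ℝ) (hc : 0 < c) (k : ℕ) :
    Summable (fun n : ℤ => |(n : ℝ)| ^ k * Real.exp (-c * (n:ℝ) ^ 2)) := by
  apply Summable.of_nat_of_neg
  · have := sum_nat_aux c hc k
    apply this.congr
    intro n; push_cast
    rw [abs_of_nonneg (Nat.cast_nonneg n)]
  · have := sum_nat_aux c hc k
    apply this.congr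
    intro n; push_cast
    rw [abs_neg, abs_of_nonneg (Nat.cast_nonneg n), neg_pow, neg_one_sq, one_mul]

private lemma sum_int_exp (c : ℝ) (hc : 0 < c) :
    Summable (fun n : ℤ => Real.exp (-c * (n:ℝ) ^ 2)) := by
  have := sum_int_aux c hc 0
  simpa using this

private lemma sum_int_sq (c : ℝ) (hc : 0 < c) :
    Summable (fun n : ℤ => (n:ℝ)^2 * Real.exp (-c * (n:ℝ) ^ 2)) := by
  have := sum_int_aux c hc 2
  simpa [sq_abs] using this

private lemma term_hasDeriv (n : ℤ) (σ : ℝ) :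
    HasDerivAt (fun s : ℝ => Real.exp (-s * (n:ℝ)^2))
      (-(n:ℝ)^2 * Real.exp (-σ * (n:ℝ)^2)) σ := by
  have h1 : HasDerivAt (fun s : ℝ => -s * (n:ℝ)^2) (-(n:ℝ)^2) σ := by
    simpa using ((hasDerivAt_id σ).neg.mul_const ((n:ℝ)^2))
  simpa [mul_comm] using h1.exp

private lemma thetaR_hasDeriv {s : ℝ} (hs : 0 < s) :
    HasDerivAt thetaR (-∑' n : ℤ, (n:ℝ)^2 * Real.exp (-s * (n:ℝ)^2)) s := by
  have key : HasDerivAt (fun z => ∑' n : ℤ, Real.exp (-z * (n:ℝ)^2))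
      (∑' n : ℤ, -(n:ℝ)^2 * Real.exp (-s * (n:ℝ)^2)) s := by
    apply hasDerivAt_tsum_of_isPreconnected
      (u := fun n : ℤ => |(n:ℝ)|^2 * Real.exp (-(s/2) * (n:ℝ)^2))
      (sum_int_aux (s/2) (by linarith) 2) isOpen_Ioi isPreconnected_Ioi
      (fun n y _ => term_hasDeriv n y) ?_ (Set.mem_Ioi.2 (by linarith : s/2 < s))
      (sum_int_exp s hs) (Set.mem_Ioi.2 (by linarith : s/2 < s))
    intro n y hy
    rw [Real.norm_eq_abs, abs_mul, abs_neg, abs_of_nonneg (sq_nonneg (n:ℝ)),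
      abs_of_pos (Real.exp_pos _)]
    simp only [sq_abs]
    have : Real.exp (-y * (n:ℝ)^2) ≤ Real.exp (-(s/2) * (n:ℝ)^2) := by
      apply Real.exp_le_exp.2
      have hy' : s/2 < y := hy
      nlinarith [sq_nonneg (n:ℝ)]
    nlinarith [sq_nonneg (n:ℝ), Real.exp_pos (-y * (n:ℝ)^2)]
  rw [show (-∑' n : ℤ, (n:ℝ)^2 * Real.exp (-s * (n:ℝ)^2))
    = ∑' n : ℤ, -(n:ℝ)^2 * Real.exp (-s * (n:ℝ)^2) by rw [← tsum_neg]; congr 1; funext n; ring]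
  exact key


private lemma thetaR_funct_eq {s : ℝ} (hs : 0 < s) :
    thetaR s = π ^ ((1:ℝ)/2) * s ^ (-(1:ℝ)/2) * thetaR (π^2/s) := by
  have hπ := pi_pos
  have h := Real.tsum_exp_neg_mul_int_sq (a := s/π) (by positivity)
  have e1 : ∀ n : ℤ, -π * (s/π) * (n:ℝ)^2 = -s * (n:ℝ)^2 := by
    intro n; field_simp
  have e2 : ∀ n : ℤ, -π / (s/π) * (n:ℝ)^2 = -(π^2/s) * (n:ℝ)^2 := by
    intro n; field_simp
  simp only [e1, e2] at h
  rw [thetaR, thetaR, h]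
  congr 1
  rw [Real.div_rpow hs.le hπ.le, one_div_div,
    show (-(1:ℝ)/2 : ℝ) = -(1/2) by norm_num, Real.rpow_neg hs.le]
  ring

private lemma key_ineq {s : ℝ} (hs : 0 < s) :
    ∑' n : ℤ, (n:ℝ)^2 * Real.exp (-s * (n:ℝ)^2) ≤ (1/(2*s)) * thetaR s := by
  have hπ := pi_pos
  have hs' : 0 < π^2/s := by positivity
  set A := ∑' n : ℤ, (n:ℝ)^2 * Real.exp (-s * (n:ℝ)^2) with hA
  set A' := ∑' n : ℤ, (n:ℝ)^2 * Real.exp (-(π^2/s) * (n:ℝ)^2) with hA'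
  have hA'nonneg : 0 ≤ A' := tsum_nonneg (fun n => by positivity)
  have h1 : HasDerivAt thetaR (-A) s := thetaR_hasDeriv hs
  have h2 : HasDerivAt thetaR (-A') (π^2/s) := thetaR_hasDeriv hs'
  -- derivative of the transformed side
  have hrp : HasDerivAt (fun σ : ℝ => π ^ ((1:ℝ)/2) * σ ^ (-(1:ℝ)/2))
      (π ^ ((1:ℝ)/2) * (-(1:ℝ)/2 * s ^ (-(1:ℝ)/2 - 1))) s :=
    (Real.hasDerivAt_rpow_const (Or.inl hs.ne')).const_mul _
  have hinner : HasDerivAt (fun σ : ℝ => π^2/σ) (π^2 * (-1/s^2)) s := by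
    simpa [div_eq_mul_inv] using (hasDerivAt_inv hs.ne').const_mul (π^2)
  have hcomp : HasDerivAt (fun σ : ℝ => thetaR (π^2/σ)) (-A' * (π^2 * (-1/s^2))) s :=
    h2.comp s hinner
  have hg : HasDerivAt (fun σ : ℝ => π ^ ((1:ℝ)/2) * σ ^ (-(1:ℝ)/2) * thetaR (π^2/σ))
      (π ^ ((1:ℝ)/2) * (-(1:ℝ)/2 * s ^ (-(1:ℝ)/2 - 1)) * thetaR (π^2/s)
        + π ^ ((1:ℝ)/2) * s ^ (-(1:ℝ)/2) * (-A' * (π^2 * (-1/s^2)))) s :=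
    hrp.mul hcomp
  -- thetaR agrees with transformed side near s
  have heq : (fun σ : ℝ => π ^ ((1:ℝ)/2) * σ ^ (-(1:ℝ)/2) * thetaR (π^2/σ)) =ᶠ[nhds s] thetaR := by
    filter_upwards [Ioi_mem_nhds hs] with σ hσ
    exact (thetaR_funct_eq hσ).symm
  have h1' : HasDerivAt thetaR
      (π ^ ((1:ℝ)/2) * (-(1:ℝ)/2 * s ^ (-(1:ℝ)/2 - 1)) * thetaR (π^2/s)
        + π ^ ((1:ℝ)/2) * s ^ (-(1:ℝ)/2) * (-A' * (π^2 * (-1/s^2)))) s :=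
    hg.congr_of_eventuallyEq heq.symm
  have huniq := h1.unique h1'
  -- so A = (1/2) π^(1/2) s^(-1/2-1) θ(π²/s) - π^(1/2) s^(-1/2) A' π²/s²
  have hAeq : A = π ^ ((1:ℝ)/2) * ((1:ℝ)/2 * s ^ (-(1:ℝ)/2 - 1)) * thetaR (π^2/s)
      - π ^ ((1:ℝ)/2) * s ^ (-(1:ℝ)/2) * (A' * (π^2/s^2)) := by
    linear_combination (-1 : ℝ) * huniq
  have hbound : A ≤ π ^ ((1:ℝ)/2) * ((1:ℝ)/2 * s ^ (-(1:ℝ)/2 - 1)) * thetaR (π^2/s) := by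
    rw [hAeq]
    have : 0 ≤ π ^ ((1:ℝ)/2) * s ^ (-(1:ℝ)/2) * (A' * (π^2/s^2)) := by positivity
    linarith
  calc A ≤ π ^ ((1:ℝ)/2) * ((1:ℝ)/2 * s ^ (-(1:ℝ)/2 - 1)) * thetaR (π^2/s) := hbound
    _ = (1/(2*s)) * thetaR s := by
        rw [thetaR_funct_eq hs]
        rw [show (-(1:ℝ)/2 - 1 : ℝ) = -(1:ℝ)/2 + (-1) by ring,
          Real.rpow_add hs, Real.rpow_neg_one]
        field_simp

private lemma poisson (T : ℝ) (hT : 0 < T) (x : ℝ) :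
    (∑' j : ℤ, Real.exp (-(x + 2*(j:ℝ)*π)^2 * T^2 / 2))
      = (2*π*T^2) ^ (-(1:ℝ)/2)
        * ∑' n : ℤ, Real.exp (-(1/(2*T^2)) * (n:ℝ)^2) * Real.cos ((n:ℝ)*x) := by
  have hπ := pi_pos
  have ha : (0:ℝ) < 2*π*T^2 := by positivity
  have h := Complex.tsum_exp_neg_quadratic (a := ((2*π*T^2 : ℝ) : ℂ))
    (by rwa [Complex.ofReal_re]) (b := ((-(T^2*x) : ℝ) : ℂ))
  have hL : ∀ n : ℤ,
      -(π:ℂ) * ((2*π*T^2 : ℝ) : ℂ) * (n:ℂ)^2 + 2*(π:ℂ)*((-(T^2*x) : ℝ):ℂ)*(n:ℂ)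
        = ((T^2*x^2/2 : ℝ) : ℂ) + ((-(x + 2*(n:ℝ)*π)^2 * T^2 / 2 : ℝ) : ℂ) := by
    intro n; push_cast; ring
  have hR : ∀ n : ℤ,
      -(π:ℂ) / ((2*π*T^2 : ℝ) : ℂ) * ((n:ℂ) + Complex.I*((-(T^2*x) : ℝ):ℂ))^2
        = ((T^2*x^2/2 : ℝ):ℂ)
          + ((((-(1/(2*T^2)) * (n:ℝ)^2 : ℝ)):ℂ) + (((n:ℝ)*x : ℝ):ℂ)*Complex.I) := by
    intro n
    have hT2 : ((T:ℂ))^2 ≠ 0 := by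
      simpa using pow_ne_zero 2 (by exact_mod_cast hT.ne' : (T:ℂ) ≠ 0)
    have hπ' : (π:ℂ) ≠ 0 := by exact_mod_cast hπ.ne'
    have hT' : (T:ℂ) ≠ 0 := by exact_mod_cast hT.ne'
    push_cast
    field_simp
    ring_nf
    rw [Complex.I_sq]
    ring
  simp only [hL, hR, Complex.exp_add, tsum_mul_left] at h
  -- cancel the common factor
  rw [mul_left_comm] at h
  have h2 := mul_left_cancel₀ (Complex.exp_ne_zero _) h
  have hpow : (1 : ℂ)/((2*π*T^2:ℝ):ℂ) ^ (1/2 : ℂ) = (((2*π*T^2) ^ (-(1:ℝ)/2) : ℝ) : ℂ) := by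
    rw [show ((1:ℂ)/2) = (((1/2 : ℝ)) : ℂ) by norm_num, ← Complex.ofReal_cpow ha.le,
      show (-(1:ℝ)/2) = -(1/2 : ℝ) by ring, Real.rpow_neg ha.le, ← Complex.ofReal_one,
      ← Complex.ofReal_div, one_div]
  rw [hpow] at h2
  simp only [← Complex.ofReal_exp, ← Complex.ofReal_tsum] at h2
  have hsum : Summable fun n : ℤ =>
      (Real.exp (-(1/(2*T^2)) * (n:ℝ)^2) : ℂ) * Complex.exp (((n:ℝ)*x : ℝ) * Complex.I) := by
    apply Summable.of_norm
    have := sum_int_exp (1/(2*T^2)) (by positivity)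
    apply this.congr
    intro n
    have h0 : ((((n:ℝ)*x : ℝ) : ℂ) * Complex.I).re = 0 := by simp
    rw [norm_mul, Complex.norm_real, Real.norm_eq_abs,
      Complex.norm_exp, h0, Real.exp_zero, mul_one, abs_of_pos (Real.exp_pos _)]
  have h3 := congrArg Complex.re h2
  rw [Complex.ofReal_re, Complex.re_ofReal_mul, Complex.re_tsum hsum] at h3
  rw [h3]
  congr 1
  apply tsum_congr
  intro n
  rw [Complex.re_ofReal_mul, Complex.exp_ofReal_mul_I_re]


theorem stmt_2 (T : ℝ) (hT : 2 / π ≤ T) :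
    ∀ x : ℝ, |deriv (deriv (periodicGaussian T)) x| ≤ T ^ 2 := by
  have hπ := pi_pos
  have hT0 : 0 < T := lt_of_lt_of_le (by positivity) hT
  set s : ℝ := 1/(2*T^2) with hs_def
  have hs : 0 < s := by positivity
  set S : ℝ := thetaR s with hS_def
  have hSsum : Summable (fun n : ℤ => Real.exp (-s * (n:ℝ)^2)) := sum_int_exp s hs
  have hS1 : (1:ℝ) ≤ S := by
    have h0 : Real.exp (-s * ((0:ℤ):ℝ)^2) = 1 := by norm_num
    calc (1:ℝ) = Real.exp (-s * ((0:ℤ):ℝ)^2) := h0.symm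
      _ ≤ S := Summable.le_tsum hSsum 0 (fun j _ => (Real.exp_pos _).le)
  have hSpos : 0 < S := lt_of_lt_of_le one_pos hS1
  -- the Fourier-side functions
  set G : ℝ → ℝ := fun y => ∑' n : ℤ, Real.exp (-s * (n:ℝ)^2) * Real.cos ((n:ℝ)*y) with hG_def
  set F1 : ℝ → ℝ := fun y =>
    ∑' n : ℤ, Real.exp (-s * (n:ℝ)^2) * (-Real.sin ((n:ℝ)*y) * (n:ℝ)) with hF1_def
  set F2 : ℝ → ℝ := fun y =>
    ∑' n : ℤ, Real.exp (-s * (n:ℝ)^2) * (-Real.cos ((n:ℝ)*y) * (n:ℝ)) * (n:ℝ) with hF2_def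
  -- periodicGaussian = G / S
  have hpg : periodicGaussian T = fun y => G y / S := by
    funext y
    rw [periodicGaussian]
    have hnum := poisson T hT0 y
    have hden := poisson T hT0 0
    simp only [zero_add, mul_zero, Real.cos_zero, mul_one] at hden
    rw [hnum, hden]
    rw [mul_div_mul_left]
    · rw [hG_def, hS_def, thetaR, hs_def]
    · positivity
  -- derivatives
  have hlin : ∀ (n : ℤ) (y : ℝ), HasDerivAt (fun z : ℝ => (n:ℝ)*z) (n:ℝ) y := by
    intro n y; simpa using (hasDerivAt_id y).const_mul (n:ℝ)
  have hGderiv : ∀ y : ℝ, HasDerivAt G (F1 y) y := by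
    intro y
    refine hasDerivAt_tsum (𝕜 := ℝ) (u := fun n : ℤ => |(n:ℝ)|^1 * Real.exp (-s * (n:ℝ)^2))
      (g := fun (n:ℤ) (z:ℝ) => Real.exp (-s*(n:ℝ)^2) * Real.cos ((n:ℝ)*z))
      (g' := fun (n:ℤ) (z:ℝ) => Real.exp (-s*(n:ℝ)^2) * (-Real.sin ((n:ℝ)*z) * (n:ℝ)))
      (y₀ := 0) (sum_int_aux s hs 1) ?_ ?_ ?_ y
    · intro n z
      exact ((Real.hasDerivAt_cos ((n:ℝ)*z)).comp z (hlin n z)).const_mul _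
    · intro n z
      show _ ≤ |(n:ℝ)|^1 * Real.exp (-s * (n:ℝ)^2)
      rw [Real.norm_eq_abs, abs_mul, abs_mul, abs_of_pos (Real.exp_pos _), abs_neg, pow_one]
      calc Real.exp (-s * (n:ℝ)^2) * (|Real.sin ((n:ℝ)*z)| * |(n:ℝ)|)
          ≤ Real.exp (-s * (n:ℝ)^2) * (1 * |(n:ℝ)|) := by
            apply mul_le_mul_of_nonneg_left _ (Real.exp_pos _).le
            exact mul_le_mul_of_nonneg_right (Real.abs_sin_le_one _) (abs_nonneg _)
        _ = |(n:ℝ)| * Real.exp (-s * (n:ℝ)^2) := by ring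
    · apply hSsum.congr
      intro n; simp
  have hF1deriv : ∀ y : ℝ, HasDerivAt F1 (F2 y) y := by
    intro y
    refine hasDerivAt_tsum (𝕜 := ℝ) (u := fun n : ℤ => |(n:ℝ)|^2 * Real.exp (-s * (n:ℝ)^2))
      (g := fun (n:ℤ) (z:ℝ) => Real.exp (-s*(n:ℝ)^2) * (-Real.sin ((n:ℝ)*z) * (n:ℝ)))
      (g' := fun (n:ℤ) (z:ℝ) => Real.exp (-s*(n:ℝ)^2) * (-Real.cos ((n:ℝ)*z) * (n:ℝ)) * (n:ℝ))
      (y₀ := 0) (sum_int_aux s hs 2) ?_ ?_ ?_ y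
    · intro n z
      have h1 : HasDerivAt (fun w : ℝ => -Real.sin ((n:ℝ)*w))
          (-Real.cos ((n:ℝ)*z) * (n:ℝ)) z := by
        exact ((hlin n z).sin).neg.congr_deriv (by ring)
      have h2 : HasDerivAt (fun w : ℝ => -Real.sin ((n:ℝ)*w) * (n:ℝ))
          (-Real.cos ((n:ℝ)*z) * (n:ℝ) * (n:ℝ)) z := h1.mul_const _
      have h3 := h2.const_mul (Real.exp (-s*(n:ℝ)^2))
      exact h3.congr_deriv (by ring)
    · intro n z
      show _ ≤ |(n:ℝ)|^2 * Real.exp (-s * (n:ℝ)^2)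
      rw [Real.norm_eq_abs]
      have : |Real.exp (-s * (n:ℝ)^2) * (-Real.cos ((n:ℝ)*z) * (n:ℝ)) * (n:ℝ)|
          = Real.exp (-s * (n:ℝ)^2) * |Real.cos ((n:ℝ)*z)| * |(n:ℝ)| * |(n:ℝ)| := by
        rw [abs_mul, abs_mul, abs_mul, abs_neg, abs_of_pos (Real.exp_pos _)]
        ring
      rw [this]
      have hc := Real.abs_cos_le_one ((n:ℝ)*z)
      have he := (Real.exp_pos (-s * (n:ℝ)^2)).le
      have han := abs_nonneg (n:ℝ)
      calc Real.exp (-s * (n:ℝ)^2) * |Real.cos ((n:ℝ)*z)| * |(n:ℝ)| * |(n:ℝ)|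
          ≤ Real.exp (-s * (n:ℝ)^2) * 1 * |(n:ℝ)| * |(n:ℝ)| := by
            apply mul_le_mul_of_nonneg_right _ han
            apply mul_le_mul_of_nonneg_right _ han
            exact mul_le_mul_of_nonneg_left hc he
        _ = |(n:ℝ)|^2 * Real.exp (-s * (n:ℝ)^2) := by ring
    · apply summable_zero.congr
      intro n; simp
  -- compute the second derivative
  have hd1 : deriv (periodicGaussian T) = fun y => F1 y / S := by
    funext y
    rw [hpg]
    exact ((hGderiv y).div_const S).deriv
  have hd2 : ∀ x : ℝ, deriv (deriv (periodicGaussian T)) x = F2 x / S := by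
    intro x
    rw [hd1]
    exact ((hF1deriv x).div_const S).deriv
  -- the bound
  intro x
  rw [hd2 x, abs_div, abs_of_pos hSpos]
  rw [div_le_iff₀ hSpos]
  have hb1 : |F2 x| ≤ ∑' n : ℤ, (n:ℝ)^2 * Real.exp (-s * (n:ℝ)^2) := by
    have hsum2 := sum_int_sq s hs
    have habs : ∀ n : ℤ, |Real.exp (-s * (n:ℝ)^2) * (-Real.cos ((n:ℝ)*x) * (n:ℝ)) * (n:ℝ)|
        ≤ (n:ℝ)^2 * Real.exp (-s * (n:ℝ)^2) := by
      intro n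
      rw [abs_mul, abs_mul, abs_mul, abs_neg, abs_of_pos (Real.exp_pos _)]
      have hc := Real.abs_cos_le_one ((n:ℝ)*x)
      have he := (Real.exp_pos (-s * (n:ℝ)^2)).le
      have han := abs_nonneg (n:ℝ)
      have h2 : |(n:ℝ)| * |(n:ℝ)| = (n:ℝ)^2 := by rw [← abs_mul, ← sq, abs_of_nonneg (sq_nonneg _)]
      calc Real.exp (-s * (n:ℝ)^2) * (|Real.cos ((n:ℝ)*x)| * |(n:ℝ)|) * |(n:ℝ)|
          ≤ Real.exp (-s * (n:ℝ)^2) * (1 * |(n:ℝ)|) * |(n:ℝ)| := by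
            apply mul_le_mul_of_nonneg_right _ han
            apply mul_le_mul_of_nonneg_left _ he
            exact mul_le_mul_of_nonneg_right hc han
        _ = (n:ℝ)^2 * Real.exp (-s * (n:ℝ)^2) := by rw [← h2]; ring
    have hsumabs : Summable (fun n : ℤ =>
        |Real.exp (-s * (n:ℝ)^2) * (-Real.cos ((n:ℝ)*x) * (n:ℝ)) * (n:ℝ)|) :=
      Summable.of_nonneg_of_le (fun n => abs_nonneg _) habs hsum2
    calc |F2 x| ≤ ∑' n : ℤ, |Real.exp (-s * (n:ℝ)^2) * (-Real.cos ((n:ℝ)*x) * (n:ℝ)) * (n:ℝ)| := by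
          rw [hF2_def]
          have hn : Summable (fun n : ℤ =>
              ‖Real.exp (-s * (n:ℝ)^2) * (-Real.cos ((n:ℝ)*x) * (n:ℝ)) * (n:ℝ)‖) := by
            simpa only [Real.norm_eq_abs] using hsumabs
          have := norm_tsum_le_tsum_norm hn
          simpa only [Real.norm_eq_abs] using this
      _ ≤ ∑' n : ℤ, (n:ℝ)^2 * Real.exp (-s * (n:ℝ)^2) := Summable.tsum_le_tsum habs hsumabs hsum2
  have hb2 : ∑' n : ℤ, (n:ℝ)^2 * Real.exp (-s * (n:ℝ)^2) ≤ T^2 * S := by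
    have := key_ineq hs
    have h12 : (1:ℝ)/(2*s) = T^2 := by rw [hs_def]; field_simp
    rw [h12] at this
    exact this
  exact le_trans hb1 hb2
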